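/- Let X ∈ ℝ^{d×k} (d ≤ k) have full rank d. For every Ẋ ∈ ℝ^{d×k} satisfying Ẋ Xᵀ = X Ẋᵀ, one has ‖Xᵀ Ẋ + Ẋᵀ X‖_F ≥ √2 · σ_d(X) · ‖Ẋ‖_F. -/
import Mathlib


open Matrix

/-- Euclidean norm of a vector. -/
noncomputable def euclNorm {n : ℕ} (v : Fin n → ℝ) : ℝ :=
  Real.sqrt (∑ i, (v i) ^ 2)

/-- Frobenius norm of a matrix. -/
noncomputable def frobNorm {m n : ℕ} (A : Matrix (Fin m) (Fin n) ℝ) : ℝ :=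
  Real.sqrt (∑ i, ∑ j, (A i j) ^ 2)

/-- The smallest (d-th) singular value of `X ∈ ℝ^{d×k}` (for `d ≤ k`),
characterized variationally as `min_{‖u‖=1} ‖Xᵀ u‖`. -/
noncomputable def sigmaMin {d k : ℕ} (X : Matrix (Fin d) (Fin k) ℝ) : ℝ :=
  sInf {r | ∃ u : Fin d → ℝ, euclNorm u = 1 ∧ r = euclNorm (Matrix.vecMul u X)}

/-- The Procrustes distance: `min` over orthogonal `Q` of `‖X − Q X̃‖_F`. -/
noncomputable def rho {d k : ℕ} (X Y : Matrix (Fin d) (Fin k) ℝ) : ℝ :=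
  sInf {r | ∃ Q : Matrix (Fin d) (Fin d) ℝ, Qᵀ * Q = 1 ∧ r = frobNorm (X - Q * Y)}

lemma euclNorm_nonneg {n : ℕ} (v : Fin n → ℝ) : 0 ≤ euclNorm v := Real.sqrt_nonneg _

lemma euclNorm_sq {n : ℕ} (v : Fin n → ℝ) : euclNorm v ^ 2 = ∑ i, (v i) ^ 2 :=
  Real.sq_sqrt (Finset.sum_nonneg fun i _ => sq_nonneg _)

lemma euclNorm_smul {n : ℕ} (a : ℝ) (v : Fin n → ℝ) :
    euclNorm (a • v) = |a| * euclNorm v := by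
  unfold euclNorm
  rw [← Real.sqrt_sq_eq_abs, ← Real.sqrt_mul (sq_nonneg a), Finset.mul_sum]
  congr 1
  exact Finset.sum_congr rfl fun i _ => by simp [mul_pow]

lemma sigmaMin_nonneg {d k : ℕ} (X : Matrix (Fin d) (Fin k) ℝ) : 0 ≤ sigmaMin X :=
  Real.sInf_nonneg fun r ⟨u, _, hr⟩ => hr ▸ euclNorm_nonneg _

lemma sigmaMin_le {d k : ℕ} (X : Matrix (Fin d) (Fin k) ℝ) (v : Fin d → ℝ) :
    sigmaMin X * euclNorm v ≤ euclNorm (vecMul v X) := by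
  rcases eq_or_ne (euclNorm v) 0 with h0 | h0
  · rw [h0, mul_zero]; exact euclNorm_nonneg _
  have hv : 0 < euclNorm v := lt_of_le_of_ne (euclNorm_nonneg v) (Ne.symm h0)
  have hu : euclNorm ((euclNorm v)⁻¹ • v) = 1 := by
    rw [euclNorm_smul, abs_of_pos (inv_pos.2 hv), inv_mul_cancel₀ h0]
  have hb : BddBelow {r | ∃ u : Fin d → ℝ, euclNorm u = 1 ∧ r = euclNorm (vecMul u X)} :=
    ⟨0, fun r ⟨u, _, hr⟩ => hr ▸ euclNorm_nonneg _⟩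
  have hle : sigmaMin X ≤ euclNorm (vecMul ((euclNorm v)⁻¹ • v) X) :=
    csInf_le hb ⟨_, hu, rfl⟩
  have hvm : vecMul ((euclNorm v)⁻¹ • v) X = (euclNorm v)⁻¹ • vecMul v X := by
    ext j; simp [vecMul, dotProduct, Finset.mul_sum, mul_assoc]
  rw [hvm, euclNorm_smul, abs_of_pos (inv_pos.2 hv)] at hle
  have := mul_le_mul_of_nonneg_right hle hv.le
  rw [mul_assoc, mul_comm (euclNorm (vecMul v X)) (euclNorm v),
    inv_mul_cancel_left₀ h0] at this
  exact this

theorem stmt1 {d k : ℕ} (hdk : d ≤ k)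
    (X : Matrix (Fin d) (Fin k) ℝ) (hX : X.rank = d)
    (V : Matrix (Fin d) (Fin k) ℝ) (hV : V * Xᵀ = X * Vᵀ) :
    frobNorm (Xᵀ * V + Vᵀ * X) ≥ Real.sqrt 2 * sigmaMin X * frobNorm V := by
  set σ := sigmaMin X with hσdef
  have hσ : 0 ≤ σ := sigmaMin_nonneg X
  set A := Xᵀ * V with hA
  -- the sum of squares of V
  set s := ∑ p, ∑ j, (V p j) ^ 2 with hs
  have hs0 : 0 ≤ s := Finset.sum_nonneg fun _ _ => Finset.sum_nonneg fun _ _ => sq_nonneg _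
  -- rewrite LHS entries
  have hLHS : frobNorm (Xᵀ * V + Vᵀ * X)
      = Real.sqrt (∑ i, ∑ j, (A i j + A j i) ^ 2) := by
    unfold frobNorm
    congr 1
    refine Finset.sum_congr rfl fun i _ => Finset.sum_congr rfl fun j _ => ?_
    congr 1
    simp [hA, Matrix.add_apply, Matrix.mul_apply, mul_comm]
  -- trace term nonneg
  have ht : 0 ≤ ∑ i, ∑ j, A i j * A j i := by
    have h1 : ∑ i, ∑ j, A i j * A j i = trace (A * A) := by
      simp [trace, Matrix.diag, Matrix.mul_apply]
    have h2 : trace (A * A) = trace ((V * Xᵀ) * (V * Xᵀ)) := by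
      have e1 : A * A = Xᵀ * (V * Xᵀ * V) := by
        rw [hA, Matrix.mul_assoc, Matrix.mul_assoc]
      rw [e1, Matrix.trace_mul_comm]
      congr 1
      rw [Matrix.mul_assoc]
    have hB : ∀ p q, (V * Xᵀ) q p = (V * Xᵀ) p q := by
      intro p q
      have h3 : (V * Xᵀ) q p = (X * Vᵀ) q p := by rw [hV]
      rw [h3]
      simp [Matrix.mul_apply, mul_comm]
    have h4a : trace ((V * Xᵀ) * (V * Xᵀ)) = ∑ p, ∑ q, (V * Xᵀ) p q * (V * Xᵀ) q p := by
      simp only [Matrix.trace, Matrix.diag]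
      exact Finset.sum_congr rfl fun p _ => Matrix.mul_apply
    have h4 : trace ((V * Xᵀ) * (V * Xᵀ)) = ∑ p, ∑ q, ((V * Xᵀ) p q) ^ 2 := by
      rw [h4a]
      refine Finset.sum_congr rfl fun p _ => Finset.sum_congr rfl fun q _ => ?_
      rw [hB p q]; ring
    rw [h1, h2, h4]
    exact Finset.sum_nonneg fun _ _ => Finset.sum_nonneg fun _ _ => sq_nonneg _
  -- column bound
  have hcol : σ ^ 2 * s ≤ ∑ i, ∑ j, (A i j) ^ 2 := by
    rw [show (∑ i, ∑ j, (A i j) ^ 2) = ∑ j, ∑ i, (A i j) ^ 2 from Finset.sum_comm]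
    rw [hs, show (∑ p, ∑ j, (V p j) ^ 2) = ∑ j, ∑ p, (V p j) ^ 2 from Finset.sum_comm,
      Finset.mul_sum]
    refine Finset.sum_le_sum fun j _ => ?_
    have e1 : ∑ i, (A i j) ^ 2 = euclNorm (vecMul (fun p => V p j) X) ^ 2 := by
      rw [euclNorm_sq]
      refine Finset.sum_congr rfl fun i _ => ?_
      congr 1
      simp [hA, Matrix.mul_apply, vecMul, dotProduct, mul_comm]
    have e2 : σ ^ 2 * ∑ p, (V p j) ^ 2 = (σ * euclNorm fun p => V p j) ^ 2 := by
      rw [mul_pow, euclNorm_sq]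
    rw [e1, e2]
    exact pow_le_pow_left₀ (mul_nonneg hσ (euclNorm_nonneg _)) (sigmaMin_le X _) 2
  -- expand squares
  have key : 2 * (σ ^ 2 * s) ≤ ∑ i, ∑ j, (A i j + A j i) ^ 2 := by
    have hswap : ∑ i, ∑ j, (A j i) ^ 2 = ∑ i, ∑ j, (A i j) ^ 2 := Finset.sum_comm
    have e1 : ∑ i, ∑ j, (A i j + A j i) ^ 2
        = (∑ i, ∑ j, (A i j) ^ 2) + (∑ i, ∑ j, 2 * (A i j * A j i))
          + ∑ i, ∑ j, (A j i) ^ 2 := by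
      rw [← Finset.sum_add_distrib, ← Finset.sum_add_distrib]
      refine Finset.sum_congr rfl fun i _ => ?_
      rw [← Finset.sum_add_distrib, ← Finset.sum_add_distrib]
      exact Finset.sum_congr rfl fun j _ => by ring
    have e2 : ∑ i, ∑ j, 2 * (A i j * A j i) = 2 * ∑ i, ∑ j, A i j * A j i := by
      rw [Finset.mul_sum]
      exact Finset.sum_congr rfl fun i _ => (Finset.mul_sum _ _ _).symm
    rw [e1, e2, hswap]
    nlinarith [hcol, ht]
  -- conclude
  rw [hLHS, ge_iff_le]
  have hV2 : frobNorm V = Real.sqrt s := rfl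
  rw [hV2]
  have hrhs : Real.sqrt 2 * σ * Real.sqrt s = Real.sqrt (2 * (σ ^ 2 * s)) := by
    rw [show 2 * (σ ^ 2 * s) = (2 * σ ^ 2) * s by ring,
      Real.sqrt_mul (by positivity), Real.sqrt_mul (by norm_num), Real.sqrt_sq hσ]
  rw [hrhs]
  exact Real.sqrt_le_sqrt key
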